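/- Let V be a real vector space equipped with a symmetric bilinear form ⟨·,·⟩. Suppose H, D₁, …, D_q ∈ V satisfy ⟨H,H⟩ > 0, ⟨H,Dᵢ⟩ > 0 for all i, ⟨Dᵢ,Dⱼ⟩ = 0 for all i ≠ j, and ⟨Dᵢ,Dᵢ⟩ < 0 for all i. Then the vectors H, D₁, …, D_q are linearly independent. -/

import Mathlib

/-- If `H, D₁, …, D_q` satisfy `⟨H,H⟩ > 0`, `⟨H,Dᵢ⟩ > 0`, `⟨Dᵢ,Dⱼ⟩ = 0` for `i ≠ j`
and `⟨Dᵢ,Dᵢ⟩ < 0`, then `H, D₁, …, D_q` are linearly independent. -/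
theorem stmt0 {V : Type*} [AddCommGroup V] [Module ℝ V]
    (B : LinearMap.BilinForm ℝ V) (hB : B.IsSymm)
    (q : ℕ) (H : V) (D : Fin q → V)
    (hH : 0 < B H H) (hHD : ∀ i, 0 < B H (D i))
    (hij : ∀ i j, i ≠ j → B (D i) (D j) = 0)
    (hDi : ∀ i, B (D i) (D i) < 0) :
    LinearIndependent ℝ (Fin.cons H D : Fin (q + 1) → V) := by
  rw [Fintype.linearIndependent_iff]
  intro g hg
  rw [Fin.sum_univ_succ] at hg
  simp only [Fin.cons_zero, Fin.cons_succ] at hg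
  have hz : ∀ w : V, g 0 * B H w + ∑ i, g i.succ * B (D i) w = 0 := by
    intro w
    have := congrArg (fun v => B v w) hg
    simpa [map_sum, LinearMap.smul_apply, smul_eq_mul, mul_comm] using this
  have key : ∀ j, g 0 * B H (D j) + g j.succ * B (D j) (D j) = 0 := by
    intro j
    have h := hz (D j)
    rwa [Finset.sum_eq_single j (fun i _ hi => by rw [hij i j hi, mul_zero])
      (fun h => absurd (Finset.mem_univ j) h)] at h
  have hsym : ∀ i, B (D i) H = B H (D i) := fun i => hB.eq (D i) H
  have hzH : g 0 * B H H + ∑ i, g i.succ * B H (D i) = 0 := by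
    have h := hz H
    simp only [hsym] at h
    exact h
  have h2 : ∀ j, g 0 * (g j.succ * B H (D j)) = -(g j.succ ^ 2 * B (D j) (D j)) :=
    fun j => by linear_combination (g j.succ) * key j
  have hsum : (g 0) ^ 2 * B H H = ∑ i, (g i.succ) ^ 2 * B (D i) (D i) := by
    have h1 : (g 0) ^ 2 * B H H + ∑ i, g 0 * (g i.succ * B H (D i)) = 0 := by
      rw [← Finset.mul_sum]; linear_combination (g 0) * hzH
    rw [Finset.sum_congr rfl (fun i _ => h2 i), Finset.sum_neg_distrib] at h1
    linarith
  have hle : ∑ i, (g i.succ) ^ 2 * B (D i) (D i) ≤ 0 :=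
    Finset.sum_nonpos fun i _ => mul_nonpos_of_nonneg_of_nonpos (sq_nonneg _) (hDi i).le
  have hsq : (g 0) ^ 2 * B H H ≤ 0 := hsum.le.trans hle
  have h0 : g 0 = 0 := by
    by_contra hne
    have hp : 0 < (g 0) ^ 2 := by positivity
    nlinarith [mul_pos hp hH]
  intro i
  refine Fin.cases h0 (fun j => ?_) i
  have hk := key j
  rw [h0, zero_mul, zero_add] at hk
  exact (mul_eq_zero.mp hk).resolve_right (hDi j).ne
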